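/- Let f : [a,b] → ℝ be twice differentiable with f' ≥ 0, f'' ≥ 0, and f(t) > 0 for all t ∈ [a,b]. Let g be an increasing, continuous function on [a,b] with g ≥ 0, and let h belong to D₊[a,b] or D₋[a,b] be increasing and nonnegative. If n ∈ ℕ and f(a)^{n+1}·(f'(a))ⁿ·h(a) ≥ n!/(n+1)^{n-1}, then (b-a)·f(a)^{n+1}·g(a)^{n+1}·h(a)/f(b) + (∫_a^b g/f)^{n+1} ≤ ∫_a^b fⁿ·g^{n+1}·h. -/

import Mathlib

/-- `D₊[a,b]`: continuous functions on `[a,b]` having a right-derivative at every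
point of `(a,b)`. -/
def DPlus (a b : ℝ) (h : ℝ → ℝ) : Prop :=
  ContinuousOn h (Set.Icc a b) ∧ ∀ x ∈ Set.Ioo a b, ∃ L : ℝ, HasDerivWithinAt h L (Set.Ioi x) x

/-- `D₋[a,b]`: continuous functions on `[a,b]` having a left-derivative at every
point of `(a,b)`. -/
def DMinus (a b : ℝ) (h : ℝ → ℝ) : Prop :=
  ContinuousOn h (Set.Icc a b) ∧ ∀ x ∈ Set.Ioo a b, ∃ L : ℝ, HasDerivWithinAt h L (Set.Iio x) x

/-- Core scalar inequality: `(n+1) (log u)^n ≤ n!/(n+1)^{n-1} (u^{n+1} - 1)` for `u ≥ 1`. -/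
lemma core_ineq (n : ℕ) (hn : 1 ≤ n) {u : ℝ} (hu : 1 ≤ u) :
    ((n : ℝ) + 1) * Real.log u ^ n ≤
      (n.factorial : ℝ) / ((n : ℝ) + 1) ^ (n - 1) * (u ^ (n + 1) - 1) := by
  have hu0 : (0 : ℝ) < u := lt_of_lt_of_le one_pos hu
  have hlog : 0 ≤ Real.log u := Real.log_nonneg hu
  set v : ℝ := ((n : ℝ) + 1) * Real.log u with hv
  have hv0 : 0 ≤ v := by positivity
  have hexp : u ^ (n + 1) = Real.exp v := by
    rw [hv, show ((n : ℝ) + 1) = ((n + 1 : ℕ) : ℝ) by push_cast; ring, Real.exp_nat_mul,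
      Real.exp_log hu0]
  have hne : (0 : ℕ) ≠ n := by omega
  have hpair : (1 : ℝ) + v ^ n / (n.factorial : ℝ) =
      ∑ i ∈ ({0, n} : Finset ℕ), v ^ i / (i.factorial : ℝ) := by
    rw [Finset.sum_pair hne]; norm_num
  have hsub : ({0, n} : Finset ℕ) ⊆ Finset.range (n + 1) := by
    intro i hi
    simp only [Finset.mem_insert, Finset.mem_singleton] at hi
    rcases hi with rfl | rfl <;> simp [Finset.mem_range] <;> omega
  have hsum : (1 : ℝ) + v ^ n / (n.factorial : ℝ) ≤ Real.exp v := by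
    rw [hpair]
    refine le_trans (Finset.sum_le_sum_of_subset_of_nonneg hsub ?_) ?_
    · intro i _ _; positivity
    · exact Real.sum_le_exp_of_nonneg hv0 (n + 1)
  have hnn : n - 1 + 1 = n := Nat.succ_pred_eq_of_pos hn
  have hpow : ((n : ℝ) + 1) ^ n = ((n : ℝ) + 1) ^ (n - 1) * ((n : ℝ) + 1) := by
    rw [← pow_succ, hnn]
  have hL : v ^ n = ((n : ℝ) + 1) ^ (n - 1) * (((n : ℝ) + 1) * Real.log u ^ n) := by
    rw [hv, mul_pow, hpow]; ring
  have h2 : v ^ n / (n.factorial : ℝ) ≤ u ^ (n + 1) - 1 := by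
    rw [hexp]; linarith
  have hfac : (0 : ℝ) < (n.factorial : ℝ) := by positivity
  have hnp : (0 : ℝ) < ((n : ℝ) + 1) ^ (n - 1) := by positivity
  calc ((n : ℝ) + 1) * Real.log u ^ n
      = (n.factorial : ℝ) / ((n : ℝ) + 1) ^ (n - 1) * (v ^ n / (n.factorial : ℝ)) := by
        rw [hL]; field_simp
    _ ≤ _ := mul_le_mul_of_nonneg_left h2 (by positivity)

/-- `∫_a^x dt/(c+d(t-a)) = (1/d) log(1 + d(x-a)/c)`. -/
lemma log_integral (c d : ℝ) (hc : 0 < c) (hd : 0 < d) (a x : ℝ) (hax : a ≤ x) :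
    (∫ t in a..x, 1 / (c + d * (t - a))) = (1 / d) * Real.log (1 + d * (x - a) / c) := by
  have h1 : (fun t : ℝ => 1 / (c + d * (t - a))) = fun t => (fun y : ℝ => 1 / y) (d * t + (c - d * a)) := by
    funext t; ring_nf
  rw [h1, intervalIntegral.integral_comp_mul_add (fun y : ℝ => 1 / y) hd.ne' (c - d * a)]
  have e1 : d * a + (c - d * a) = c := by ring
  have e2 : d * x + (c - d * a) = c + d * (x - a) := by ring
  rw [e1, e2]
  have hcx : 0 < c + d * (x - a) := by nlinarith [mul_nonneg hd.le (sub_nonneg.2 hax)]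
  rw [integral_one_div]
  · rw [smul_eq_mul]
    congr 1
    · rw [one_div]
    · congr 1
      field_simp
  · intro h0
    rw [Set.mem_uIcc] at h0
    rcases h0 with ⟨h0, _⟩ | ⟨h0, _⟩ <;> linarith

theorem stmt6 (a b : ℝ) (hab : a < b)
    (f : ℝ → ℝ)
    (hf_diff : DifferentiableOn ℝ f (Set.Icc a b))
    (hf_diff2 : DifferentiableOn ℝ (derivWithin f (Set.Icc a b)) (Set.Icc a b))
    (hf'_nonneg : ∀ x ∈ Set.Icc a b, 0 ≤ derivWithin f (Set.Icc a b) x)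
    (hf''_nonneg : ∀ x ∈ Set.Icc a b,
      0 ≤ derivWithin (derivWithin f (Set.Icc a b)) (Set.Icc a b) x)
    (hf_pos : ∀ t ∈ Set.Icc a b, 0 < f t)
    (g : ℝ → ℝ) (hg_mono : MonotoneOn g (Set.Icc a b))
    (hg_cont : ContinuousOn g (Set.Icc a b))
    (hg_nonneg : ∀ x ∈ Set.Icc a b, 0 ≤ g x)
    (h : ℝ → ℝ) (hD : DPlus a b h ∨ DMinus a b h)
    (hh_mono : MonotoneOn h (Set.Icc a b))
    (hh_nonneg : ∀ x ∈ Set.Icc a b, 0 ≤ h x)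
    (n : ℕ) (hn : 1 ≤ n)
    (hcond : (n.factorial : ℝ) / ((n : ℝ) + 1) ^ (n - 1) ≤
      f a ^ (n + 1) * derivWithin f (Set.Icc a b) a ^ n * h a) :
    (b - a) * f a ^ (n + 1) * g a ^ (n + 1) * h a / f b +
      (∫ x in a..b, g x / f x) ^ (n + 1) ≤
    ∫ x in a..b, f x ^ n * g x ^ (n + 1) * h x := by
  clear hD
  have hableq : a ≤ b := hab.le
  have haS : a ∈ Set.Icc a b := Set.left_mem_Icc.2 hableq
  have hbS : b ∈ Set.Icc a b := Set.right_mem_Icc.2 hableq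
  set c : ℝ := f a with hc_def
  set d : ℝ := derivWithin f (Set.Icc a b) a with hd_def
  set H : ℝ := h a with hH_def
  have hc : 0 < c := hf_pos a haS
  have hK : (0 : ℝ) < (n.factorial : ℝ) / ((n : ℝ) + 1) ^ (n - 1) := by positivity
  have hprod : (0 : ℝ) < c ^ (n + 1) * d ^ n * H := lt_of_lt_of_le hK hcond
  have hd0 : 0 ≤ d := hf'_nonneg a haS
  have hd : 0 < d := by
    rcases eq_or_lt_of_le hd0 with hd' | hd'
    · exfalso
      rw [← hd', zero_pow (by omega : n ≠ 0)] at hprod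
      simp at hprod
    · exact hd'
  have hH : 0 < H := by
    by_contra hH'
    push_neg at hH'
    linarith [mul_nonpos_of_nonneg_of_nonpos
      (mul_pos (pow_pos hc (n + 1)) (pow_pos hd n)).le hH']
  have hf_cont : ContinuousOn f (Set.Icc a b) := hf_diff.continuousOn
  have hfb : 0 < f b := hf_pos b hbS
  -- monotonicity of f' on [a,b]
  have hf'mono : MonotoneOn (derivWithin f (Set.Icc a b)) (Set.Icc a b) := by
    apply monotoneOn_of_deriv_nonneg (convex_Icc a b) hf_diff2.continuousOn
      (hf_diff2.mono interior_subset)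
    intro x hx
    rw [interior_Icc] at hx
    rw [← derivWithin_of_mem_nhds (Icc_mem_nhds hx.1 hx.2)]
    exact hf''_nonneg x (Set.Ioo_subset_Icc_self hx)
  -- monotonicity of f on [a,b]
  have hfmono : MonotoneOn f (Set.Icc a b) := by
    apply monotoneOn_of_deriv_nonneg (convex_Icc a b) hf_cont (hf_diff.mono interior_subset)
    intro x hx
    rw [interior_Icc] at hx
    rw [← derivWithin_of_mem_nhds (Icc_mem_nhds hx.1 hx.2)]
    exact hf'_nonneg x (Set.Ioo_subset_Icc_self hx)
  -- tangent line bound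
  have htan : ∀ t ∈ Set.Icc a b, c + d * (t - a) ≤ f t := by
    intro t ht
    rcases eq_or_lt_of_le ht.1 with hat | hat
    · rw [← hat]; simp; exact le_rfl
    · have hcont : ContinuousOn f (Set.Icc a t) := hf_cont.mono (Set.Icc_subset_Icc le_rfl ht.2)
      have hder : ∀ y ∈ Set.Ioo a t, HasDerivAt f (deriv f y) y := by
        intro y hy
        have hyI : y ∈ Set.Ioo a b := ⟨hy.1, lt_of_lt_of_le hy.2 ht.2⟩
        exact ((hf_diff y (Set.Ioo_subset_Icc_self hyI)).differentiableAt
          (Icc_mem_nhds hyI.1 hyI.2)).hasDerivAt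
      obtain ⟨ξ, hξ, hsl⟩ := exists_hasDerivAt_eq_slope f (deriv f) hat hcont hder
      have hξI : ξ ∈ Set.Ioo a b := ⟨hξ.1, lt_of_lt_of_le hξ.2 ht.2⟩
      have h1 : d ≤ deriv f ξ := by
        rw [← derivWithin_of_mem_nhds (Icc_mem_nhds hξI.1 hξI.2)]
        exact hf'mono haS (Set.Ioo_subset_Icc_self hξI) hξ.1.le
      rw [hsl, le_div_iff₀ (sub_pos.2 hat)] at h1
      linarith
  -- the weight and its primitive
  set w : ℝ → ℝ := fun t => g t / f t with hw_def
  have hw_cont : ContinuousOn w (Set.Icc a b) :=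
    hg_cont.div hf_cont (fun t ht => (hf_pos t ht).ne')
  set G : ℝ → ℝ := fun x => ∫ t in a..x, w t with hG_def
  have hw_int : ∀ x ∈ Set.Icc a b, IntervalIntegrable w MeasureTheory.volume a x := by
    intro x hx
    apply ContinuousOn.intervalIntegrable
    apply hw_cont.mono
    rw [Set.uIcc_of_le hx.1]
    exact Set.Icc_subset_Icc le_rfl hx.2
  have hG0 : ∀ x ∈ Set.Icc a b, 0 ≤ G x := by
    intro x hx
    apply intervalIntegral.integral_nonneg hx.1
    intro t ht
    exact div_nonneg (hg_nonneg t ⟨ht.1, le_trans ht.2 hx.2⟩)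
      (hf_pos t ⟨ht.1, le_trans ht.2 hx.2⟩).le
  -- bound G x ≤ g x * ((1/d) * log u)
  have hGle : ∀ x ∈ Set.Icc a b,
      G x ≤ g x * ((1 / d) * Real.log (1 + d * (x - a) / c)) := by
    intro x hx
    have hgx : 0 ≤ g x := hg_nonneg x hx
    have step1 : G x ≤ g x * ∫ t in a..x, 1 / f t := by
      rw [← intervalIntegral.integral_const_mul]
      apply intervalIntegral.integral_mono_on hx.1 (hw_int x hx)
      · exact (continuousOn_const.mul ((continuousOn_const.div hf_cont
          (fun t ht => (hf_pos t ht).ne')).mono (by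
            rw [Set.uIcc_of_le hx.1]; exact Set.Icc_subset_Icc le_rfl hx.2))).intervalIntegrable
      · intro t ht
        have htI : t ∈ Set.Icc a b := ⟨ht.1, le_trans ht.2 hx.2⟩
        have hft : 0 < f t := hf_pos t htI
        have hgle : g t ≤ g x := hg_mono htI hx ht.2
        show g t / f t ≤ g x * (1 / f t)
        rw [mul_one_div]
        exact div_le_div_of_nonneg_right hgle hft.le
    have step2 : (∫ t in a..x, 1 / f t) ≤ (1 / d) * Real.log (1 + d * (x - a) / c) := by
      rw [← log_integral c d hc hd a x hx.1]
      apply intervalIntegral.integral_mono_on hx.1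
      · exact ((continuousOn_const.div hf_cont (fun t ht => (hf_pos t ht).ne')).mono (by
          rw [Set.uIcc_of_le hx.1]; exact Set.Icc_subset_Icc le_rfl hx.2)).intervalIntegrable
      · apply ContinuousOn.intervalIntegrable
        apply ContinuousOn.div continuousOn_const (by fun_prop)
        intro t ht
        rw [Set.uIcc_of_le hx.1] at ht
        have : 0 ≤ d * (t - a) := mul_nonneg hd.le (sub_nonneg.2 ht.1)
        intro hzero; linarith
      · intro t ht
        have htI : t ∈ Set.Icc a b := ⟨ht.1, le_trans ht.2 hx.2⟩
        have hpos : 0 < c + d * (t - a) := by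
          have : 0 ≤ d * (t - a) := mul_nonneg hd.le (sub_nonneg.2 ht.1)
          linarith
        exact one_div_le_one_div_of_le hpos (htan t htI)
    calc G x ≤ g x * ∫ t in a..x, 1 / f t := step1
      _ ≤ g x * ((1 / d) * Real.log (1 + d * (x - a) / c)) :=
          mul_le_mul_of_nonneg_left step2 hgx
  -- pointwise key inequality
  set C : ℝ := c ^ (n + 1) * g a ^ (n + 1) * H / f b with hC_def
  have hkey : ∀ x ∈ Set.Icc a b,
      ((n : ℝ) + 1) * G x ^ n * (g x / f x) + C ≤ f x ^ n * g x ^ (n + 1) * h x := by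
    intro x hx
    have hgx : 0 ≤ g x := hg_nonneg x hx
    have hfx : 0 < f x := hf_pos x hx
    have hs : 0 ≤ x - a := sub_nonneg.2 hx.1
    set u : ℝ := 1 + d * (x - a) / c with hu_def
    have hu : 1 ≤ u := by
      rw [hu_def]
      have : 0 ≤ d * (x - a) / c := by positivity
      linarith
    set P : ℝ := Real.log u with hP_def
    have hP0 : 0 ≤ P := Real.log_nonneg hu
    have hcu : c * u ≤ f x := by
      have h1 : c * u = c + d * (x - a) := by rw [hu_def]; field_simp
      rw [h1]; exact htan x hx
    -- bound on G x ^ n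
    have hGn : G x ^ n ≤ g x ^ n * (P ^ n / d ^ n) := by
      have h1 : G x ≤ g x * ((1 / d) * P) := hGle x hx
      have h2 : G x ^ n ≤ (g x * ((1 / d) * P)) ^ n :=
        pow_le_pow_left₀ (hG0 x hx) h1 n
      calc G x ^ n ≤ (g x * ((1 / d) * P)) ^ n := h2
        _ = g x ^ n * (P ^ n / d ^ n) := by
            rw [mul_pow, mul_pow, one_div, inv_pow]
            field_simp
    set Q : ℝ := g x ^ (n + 1) / f x with hQ_def
    have hQ0 : 0 ≤ Q := by positivity
    have e1 : ((n : ℝ) + 1) * G x ^ n * (g x / f x) ≤ Q * (((n : ℝ) + 1) * P ^ n / d ^ n) := by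
      have hmul : G x ^ n * (g x / f x) ≤ (g x ^ n * (P ^ n / d ^ n)) * (g x / f x) :=
        mul_le_mul_of_nonneg_right hGn (by positivity)
      have heq : (g x ^ n * (P ^ n / d ^ n)) * (g x / f x) = Q * (P ^ n / d ^ n) := by
        rw [hQ_def]; field_simp; ring
      calc ((n : ℝ) + 1) * G x ^ n * (g x / f x)
          = ((n : ℝ) + 1) * (G x ^ n * (g x / f x)) := by ring
        _ ≤ ((n : ℝ) + 1) * ((g x ^ n * (P ^ n / d ^ n)) * (g x / f x)) :=
            mul_le_mul_of_nonneg_left hmul (by positivity)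
        _ = Q * (((n : ℝ) + 1) * P ^ n / d ^ n) := by rw [heq]; ring
    have e2 : C ≤ Q * (c ^ (n + 1) * H) := by
      have hga : g a ≤ g x := hg_mono haS hx hx.1
      have hga0 : 0 ≤ g a := hg_nonneg a haS
      have hnum : c ^ (n + 1) * g a ^ (n + 1) * H ≤ c ^ (n + 1) * g x ^ (n + 1) * H := by
        have hp := pow_le_pow_left₀ hga0 hga (n + 1)
        exact mul_le_mul_of_nonneg_right
          (mul_le_mul_of_nonneg_left hp (pow_pos hc (n + 1)).le) hH.le
      have hfxb : f x ≤ f b := hfmono hx hbS hx.2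
      have hQeq : Q * (c ^ (n + 1) * H) = c ^ (n + 1) * g x ^ (n + 1) * H / f x := by
        rw [hQ_def]; ring
      rw [hC_def, hQeq]
      apply div_le_div₀ (by positivity) hnum hfx hfxb
    have e3 : ((n : ℝ) + 1) * P ^ n / d ^ n + c ^ (n + 1) * H ≤ H * f x ^ (n + 1) := by
      have c1 : ((n : ℝ) + 1) * P ^ n ≤
          (n.factorial : ℝ) / ((n : ℝ) + 1) ^ (n - 1) * (u ^ (n + 1) - 1) := core_ineq n hn hu
      have hu1 : 0 ≤ u ^ (n + 1) - 1 := by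
        have h1u : (1 : ℝ) ≤ u ^ (n + 1) := by
          simpa using pow_le_pow_left₀ zero_le_one hu (n + 1)
        linarith
      have c2 : (n.factorial : ℝ) / ((n : ℝ) + 1) ^ (n - 1) * (u ^ (n + 1) - 1) ≤
          c ^ (n + 1) * d ^ n * H * (u ^ (n + 1) - 1) :=
        mul_le_mul_of_nonneg_right hcond hu1
      have c3 : ((n : ℝ) + 1) * P ^ n / d ^ n ≤ c ^ (n + 1) * H * (u ^ (n + 1) - 1) := by
        rw [div_le_iff₀ (by positivity : (0:ℝ) < d ^ n)]
        calc ((n : ℝ) + 1) * P ^ n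
            ≤ c ^ (n + 1) * d ^ n * H * (u ^ (n + 1) - 1) := le_trans c1 c2
          _ = c ^ (n + 1) * H * (u ^ (n + 1) - 1) * d ^ n := by ring
      have c4 : (c * u) ^ (n + 1) ≤ f x ^ (n + 1) :=
        pow_le_pow_left₀ (by positivity) hcu (n + 1)
      have c5 : c ^ (n + 1) * H * (u ^ (n + 1) - 1) + c ^ (n + 1) * H = H * (c * u) ^ (n + 1) := by
        rw [mul_pow]; ring
      have c6 : H * (c * u) ^ (n + 1) ≤ H * f x ^ (n + 1) :=
        mul_le_mul_of_nonneg_left c4 hH.le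
      linarith
    have e4 : Q * (H * f x ^ (n + 1)) = f x ^ n * g x ^ (n + 1) * H := by
      rw [hQ_def]; field_simp; ring
    have e5 : f x ^ n * g x ^ (n + 1) * H ≤ f x ^ n * g x ^ (n + 1) * h x := by
      have hhx : H ≤ h x := hh_mono haS hx hx.1
      exact mul_le_mul_of_nonneg_left hhx
        (mul_nonneg (pow_pos hfx n).le (pow_nonneg hgx (n + 1)))
    calc ((n : ℝ) + 1) * G x ^ n * (g x / f x) + C
        ≤ Q * (((n : ℝ) + 1) * P ^ n / d ^ n) + Q * (c ^ (n + 1) * H) := add_le_add e1 e2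
      _ = Q * (((n : ℝ) + 1) * P ^ n / d ^ n + c ^ (n + 1) * H) := by ring
      _ ≤ Q * (H * f x ^ (n + 1)) := mul_le_mul_of_nonneg_left e3 hQ0
      _ = f x ^ n * g x ^ (n + 1) * H := e4
      _ ≤ f x ^ n * g x ^ (n + 1) * h x := e5
  -- continuity and integrability
  have hGcont : ContinuousOn G (Set.Icc a b) := by
    have hIO : MeasureTheory.IntegrableOn w (Set.uIcc a b) MeasureTheory.volume := by
      rw [Set.uIcc_of_le hableq]
      exact hw_cont.integrableOn_Icc
    have := intervalIntegral.continuousOn_primitive_interval hIO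
    rwa [Set.uIcc_of_le hableq] at this
  have hint_left : IntervalIntegrable (fun x => ((n : ℝ) + 1) * G x ^ n * (g x / f x))
      MeasureTheory.volume a b := by
    apply ContinuousOn.intervalIntegrable
    rw [Set.uIcc_of_le hableq]
    exact (continuousOn_const.mul (hGcont.pow n)).mul hw_cont
  have hh_int : IntervalIntegrable h MeasureTheory.volume a b := by
    apply MonotoneOn.intervalIntegrable
    rwa [Set.uIcc_of_le hableq]
  have hrhs_int : IntervalIntegrable (fun x => f x ^ n * g x ^ (n + 1) * h x)
      MeasureTheory.volume a b := by
    apply IntervalIntegrable.continuousOn_mul hh_int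
    rw [Set.uIcc_of_le hableq]
    exact (hf_cont.pow n).mul (hg_cont.pow (n + 1))
  -- FTC
  have hGderiv : ∀ x ∈ Set.Ioo a b, HasDerivAt G (w x) x := by
    intro x hx
    have hxI : x ∈ Set.Icc a b := Set.Ioo_subset_Icc_self hx
    exact intervalIntegral.integral_hasDerivAt_right (hw_int x hxI)
      ((hw_cont.mono Set.Ioo_subset_Icc_self).stronglyMeasurableAtFilter isOpen_Ioo x hx)
      ((hw_cont x hxI).continuousAt (Icc_mem_nhds hx.1 hx.2))
  have hFTC : (∫ x in a..b, ((n : ℝ) + 1) * G x ^ n * (g x / f x)) = G b ^ (n + 1) := by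
    have := intervalIntegral.integral_eq_sub_of_hasDeriv_right_of_le hableq
      (f := fun x => G x ^ (n + 1))
      (f' := fun x => ((n : ℝ) + 1) * G x ^ n * (g x / f x))
      (hGcont.pow (n + 1)) ?_ hint_left
    · rw [this, hG_def]
      simp [intervalIntegral.integral_same, zero_pow (by omega : n + 1 ≠ 0)]
    · intro x hx
      have hd' := (hGderiv x hx).fun_pow (n + 1)
      have : HasDerivAt (fun y => G y ^ (n + 1)) (((n : ℝ) + 1) * G x ^ n * (g x / f x)) x := by
        exact hd'.congr_deriv (by push_cast; rfl)
      exact this.hasDerivWithinAt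
  -- combine
  have hint_sum : IntervalIntegrable (fun x => ((n : ℝ) + 1) * G x ^ n * (g x / f x) + C)
      MeasureTheory.volume a b := hint_left.add intervalIntegrable_const
  have hmono := intervalIntegral.integral_mono_on hableq hint_sum hrhs_int hkey
  rw [intervalIntegral.integral_add hint_left intervalIntegrable_const] at hmono
  rw [hFTC, intervalIntegral.integral_const, smul_eq_mul] at hmono
  have hGb : G b = ∫ x in a..b, g x / f x := rfl
  rw [hGb] at hmono
  have hCrw : (b - a) * f a ^ (n + 1) * g a ^ (n + 1) * h a / f b = (b - a) * C := by
    rw [hC_def, ← hc_def, ← hH_def]; ring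
  linarith [hmono]
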